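/- Let Δ be a divergence, ρ ∈ [0,∞], X a type, and μ₁, μ₂ ∈ PMF(X). Then Δ̄²_X(μ₁‖μ₂) ≤ ρ holds if and only if for every probabilistic decision rule γ : X → PMF({Acc, Rej}), the point (Pr[γ(μ₁) = Rej], Pr[γ(μ₂) = Acc]) lies in the privacy region R^Δ(ρ). -/

import Mathlib

open scoped ENNReal

/-- A divergence: a family of functions `PMF X × PMF X → [0,∞]`, one for each type `X`. -/
def Divergence : Type 1 := ∀ X : Type, PMF X → PMF X → ℝ≥0∞

/-- The cut of a divergence `Δ` with respect to a set `W`: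
the supremum over probabilistic postprocessings into `W`. -/
noncomputable def cut (Δ : Divergence) (W : Type) : Divergence :=
  fun X μ₁ μ₂ => ⨆ γ : X → PMF W, Δ W (μ₁.bind γ) (μ₂.bind γ)

/-- The data-processing inequality for a divergence. -/
def DPI (Δ : Divergence) : Prop :=
  ∀ (X Y : Type) (γ : X → PMF Y) (μ₁ μ₂ : PMF X),
    Δ Y (μ₁.bind γ) (μ₂.bind γ) ≤ Δ X μ₁ μ₂

/-- A divergence is `k`-generated if some `k`-cut of it equals the divergence itself. -/
def kGenerated (Δ : Divergence) (k : ℕ) : Prop :=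
  ∃ W : Type, Nonempty (W ≃ Fin k) ∧ cut Δ W = Δ

/-- A two-element set of decisions. -/
inductive Decision : Type
  | Acc : Decision
  | Rej : Decision

/-- The distribution `(1−x)·δ_Acc + x·δ_Rej` on decisions, for `x ≤ 1`. -/
noncomputable def mix (x : ℝ≥0∞) (h : x ≤ 1) : PMF Decision :=
  (PMF.ofFintype (fun b => cond b x (1 - x)) (by simp [h])).map (fun b => if b then Decision.Rej else Decision.Acc)

/-- The privacy region `R^Δ(ρ)` of a divergence `Δ`: all pairs `(x,y) ∈ [0,1]²` such
that the `2`-cut of `Δ` between `(1−x)·δ_Acc + x·δ_Rej` and `y·δ_Acc + (1−y)·δ_Rej`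
is at most `ρ`. -/
noncomputable def region (Δ : Divergence) (ρ : ℝ≥0∞) : Set (ℝ≥0∞ × ℝ≥0∞) :=
  {p | ∃ (h1 : p.1 ≤ 1) (_ : p.2 ≤ 1),
    cut Δ Decision Decision (mix p.1 h1) (mix (1 - p.2) tsub_le_self) ≤ ρ}

instance : DecidableEq Decision
  | .Acc, .Acc => isTrue rfl
  | .Acc, .Rej => isFalse Decision.noConfusion
  | .Rej, .Acc => isFalse Decision.noConfusion
  | .Rej, .Rej => isTrue rfl

lemma mix_rej (x : ℝ≥0∞) (h : x ≤ 1) : mix x h Decision.Rej = x := by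
  simp only [mix, PMF.map_apply, tsum_bool, PMF.ofFintype_apply]
  simp

lemma mix_acc (x : ℝ≥0∞) (h : x ≤ 1) : mix x h Decision.Acc = 1 - x := by
  simp only [mix, PMF.map_apply, tsum_bool, PMF.ofFintype_apply]
  simp

lemma pmf_sum (p : PMF Decision) : p Decision.Acc + p Decision.Rej = 1 := by
  have := p.tsum_coe
  rw [tsum_eq_sum (s := {Decision.Acc, Decision.Rej}) (by intro x hx; exact absurd (by cases x <;> simp) hx)] at this
  simpa using this

lemma acc_eq (p : PMF Decision) : p Decision.Acc = 1 - p Decision.Rej := by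
  have := pmf_sum p
  have h2 : p Decision.Rej ≤ 1 := p.coe_le_one _
  exact ENNReal.eq_sub_of_add_eq (lt_of_le_of_lt h2 (by norm_num)).ne this

lemma mix_eq (p : PMF Decision) (h : p Decision.Rej ≤ 1) : mix (p Decision.Rej) h = p := by
  ext d
  cases d
  · rw [mix_acc]; exact (acc_eq p).symm
  · rw [mix_rej]

theorem two_cut_le_iff_region (Δ : Divergence) (ρ : ℝ≥0∞) (X : Type)
    (μ₁ μ₂ : PMF X) :
    cut Δ Decision X μ₁ μ₂ ≤ ρ ↔
      ∀ γ : X → PMF Decision,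
        ((μ₁.bind γ) Decision.Rej, (μ₂.bind γ) Decision.Acc) ∈ region Δ ρ := by
  rw [cut, iSup_le_iff]
  constructor
  · intro h γ
    refine ⟨PMF.coe_le_one _ _, PMF.coe_le_one _ _, ?_⟩
    rw [cut, iSup_le_iff]
    intro γ'
    have e1 : mix ((μ₁.bind γ) Decision.Rej) (PMF.coe_le_one _ _) = μ₁.bind γ := mix_eq _ _
    have e2 : (1 : ℝ≥0∞) - (μ₂.bind γ) Decision.Acc = (μ₂.bind γ) Decision.Rej := by
      rw [acc_eq, ENNReal.sub_sub_cancel (by norm_num) (PMF.coe_le_one _ _)]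
    have e2' : mix (1 - (μ₂.bind γ) Decision.Acc) tsub_le_self = μ₂.bind γ := by
      have : mix (1 - (μ₂.bind γ) Decision.Acc) tsub_le_self
          = mix ((μ₂.bind γ) Decision.Rej) (PMF.coe_le_one _ _) := by
        congr 1
      rw [this, mix_eq]
    simp only [e1, e2']
    rw [PMF.bind_bind μ₁, PMF.bind_bind μ₂]
    exact h _
  · intro h γ
    obtain ⟨h1, h2, hc⟩ := h γ
    have e1 : mix ((μ₁.bind γ) Decision.Rej) h1 = μ₁.bind γ := mix_eq _ _
    have e2' : mix (1 - (μ₂.bind γ) Decision.Acc) tsub_le_self = μ₂.bind γ := by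
      have : mix (1 - (μ₂.bind γ) Decision.Acc) tsub_le_self
          = mix ((μ₂.bind γ) Decision.Rej) (PMF.coe_le_one _ _) := by
        congr 1
        rw [acc_eq, ENNReal.sub_sub_cancel (by norm_num) (PMF.coe_le_one _ _)]
      rw [this, mix_eq]
    rw [cut, iSup_le_iff] at hc
    have := hc PMF.pure
    rwa [PMF.bind_pure, PMF.bind_pure, e1, e2'] at this
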